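/- Let m ≥ 1 be an integer and let q, s₁, s₂, ζ₁, ζ₂ be nonzero complex numbers such that (q;q)_k ≠ 0 and (q s₁/s₂;q)_k ≠ 0 and (q s₂/s₁;q)_k ≠ 0 for 1 ≤ k ≤ m−1, and s₂ − q^k s₁ ≠ 0 for 1 ≤ k ≤ m−1. Define P(ζ₁,ζ₂,s₁,s₂) = ζ₁^{m−1} Σ_{k=0}^{m−1} [(q^{1−m};q)_k (q^{1−m} s₁/s₂;q)_k / ((q;q)_k (q s₁/s₂;q)_k)] q^{mk} (ζ₂/ζ₁)^k (the terminating series ζ₁^{m−1}·₂φ₁(q t^{−1}, q t^{−1}s₁/s₂; q s₁/s₂; q, t ζ₂/ζ₁) at t = q^m). Then ∏_{k=1}^{m−1} [(s₁ − q^k s₂)/(s₂ − q^k s₁)] · P(ζ₂, ζ₁, s₂, s₁) = P(ζ₁, ζ₂, s₁, s₂). -/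

import Mathlib

/-- The q-shifted factorial `(a;q)_n = ∏_{k=0}^{n−1} (1 − a q^k)`. -/
noncomputable def qp (q a : ℂ) (n : ℕ) : ℂ := ∏ k ∈ Finset.range n, (1 - a * q ^ k)

/-- The terminating series
`P(ζ₁,ζ₂,s₁,s₂) = ζ₁^{m−1} ∑_{k=0}^{m−1} (q^{1−m};q)_k (q^{1−m}s₁/s₂;q)_k /
((q;q)_k (q s₁/s₂;q)_k) · q^{mk} (ζ₂/ζ₁)^k`,
which is `ζ₁^{m−1}·₂φ₁(qt⁻¹, qt⁻¹s₁/s₂; qs₁/s₂; q, tζ₂/ζ₁)` at `t = q^m`. -/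
noncomputable def Pser (m : ℕ) (q ζ₁ ζ₂ s₁ s₂ : ℂ) : ℂ :=
  ζ₁ ^ (m - 1) *
    ∑ k ∈ Finset.range m,
      qp q (q * (q ^ m)⁻¹) k * qp q (q * (q ^ m)⁻¹ * s₁ / s₂) k /
        (qp q q k * qp q (q * s₁ / s₂) k) * (q ^ m) ^ k * (ζ₂ / ζ₁) ^ k

lemma qp_zero (q a : ℂ) : qp q a 0 = 1 := Finset.prod_range_zero _

lemma qp_succ (q a : ℂ) (n : ℕ) : qp q a (n + 1) = qp q a n * (1 - a * q ^ n) :=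
  Finset.prod_range_succ _ _

lemma qp_factor_ne {q a : ℂ} {n : ℕ} (h : qp q a n ≠ 0) {i : ℕ} (hi : i < n) :
    1 - a * q ^ i ≠ 0 := fun h0 => h (Finset.prod_eq_zero (Finset.mem_range.2 hi) h0)

lemma qp_ne {q a : ℂ} {n : ℕ} (h : ∀ i, i < n → 1 - a * q ^ i ≠ 0) : qp q a n ≠ 0 :=
  Finset.prod_ne_zero_iff.2 fun i hi => h i (Finset.mem_range.1 hi)

lemma sum_aux (M : ℕ) : ∑ i ∈ Finset.range M, 2 * (1 + i) = M * (M + 1) := by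
  induction M with
  | zero => simp
  | succ M ih => rw [Finset.sum_range_succ, ih]; ring

lemma prod_pow_aux (q : ℂ) (hq : q ≠ 0) (M : ℕ) :
    (∏ i ∈ Finset.range M, ((q ^ (2 * (1 + i)))⁻¹ : ℂ)) * ((q : ℂ) ^ (M + 1)) ^ M = 1 := by
  rw [Finset.prod_inv_distrib, Finset.prod_pow_eq_pow_sum, sum_aux, ← pow_mul,
    show (M + 1) * M = M * (M + 1) from Nat.mul_comm _ _]
  exact inv_mul_cancel₀ (pow_ne_zero _ hq)

lemma keyCross (M : ℕ) (q s₁ s₂ : ℂ) (hq : q ≠ 0) (hs₁ : s₁ ≠ 0) (hs₂ : s₂ ≠ 0)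
    (hA : ∀ j, 1 ≤ j → j ≤ M → (1 : ℂ) - q ^ j ≠ 0)
    (hB : ∀ j, 1 ≤ j → j ≤ M → s₂ - q ^ j * s₁ ≠ 0) :
    ∀ k, k ≤ M →
      (∏ i ∈ Finset.range M, (s₁ - q ^ (1 + i) * s₂)) *
          (qp q (q * (q ^ (M + 1))⁻¹) (M - k) * qp q (q * (q ^ (M + 1))⁻¹ * s₂ / s₁) (M - k) *
            ((q : ℂ) ^ (M + 1)) ^ (M - k)) *
          (qp q q k * qp q (q * s₁ / s₂) k)
        = (∏ i ∈ Finset.range M, (s₂ - q ^ (1 + i) * s₁)) *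
          (qp q (q * (q ^ (M + 1))⁻¹) k * qp q (q * (q ^ (M + 1))⁻¹ * s₁ / s₂) k *
            ((q : ℂ) ^ (M + 1)) ^ k) *
          (qp q q (M - k) * qp q (q * s₂ / s₁) (M - k)) := by
  intro k
  induction k with
  | zero =>
    intro _
    simp only [Nat.sub_zero, qp_zero, pow_zero, mul_one, one_mul]
    have key1 : (∏ i ∈ Finset.range M, (s₁ - q ^ (1 + i) * s₂)) *
        qp q (q * (q ^ (M + 1))⁻¹) M * qp q (q * (q ^ (M + 1))⁻¹ * s₂ / s₁) M
        = (∏ i ∈ Finset.range M, (s₂ - q ^ (1 + i) * s₁)) * qp q q M * qp q (q * s₂ / s₁) M *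
          ∏ i ∈ Finset.range M, ((q ^ (2 * (1 + i)))⁻¹ : ℂ) := by
      have hrefl1 : qp q (q * (q ^ (M + 1))⁻¹) M
          = ∏ i ∈ Finset.range M, (1 - q * (q ^ (M + 1))⁻¹ * q ^ (M - 1 - i)) :=
        (Finset.prod_range_reflect (fun i => 1 - q * (q ^ (M + 1))⁻¹ * q ^ i) M).symm
      have hrefl2 : qp q (q * (q ^ (M + 1))⁻¹ * s₂ / s₁) M
          = ∏ i ∈ Finset.range M, (1 - q * (q ^ (M + 1))⁻¹ * s₂ / s₁ * q ^ (M - 1 - i)) :=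
        (Finset.prod_range_reflect (fun i => 1 - q * (q ^ (M + 1))⁻¹ * s₂ / s₁ * q ^ i) M).symm
      rw [hrefl1, hrefl2]
      simp only [qp]
      rw [← Finset.prod_mul_distrib, ← Finset.prod_mul_distrib, ← Finset.prod_mul_distrib,
        ← Finset.prod_mul_distrib, ← Finset.prod_mul_distrib]
      refine Finset.prod_congr rfl fun i hi => ?_
      rw [Finset.mem_range] at hi
      obtain ⟨j, rfl⟩ : ∃ j, M = i + j + 1 := ⟨M - i - 1, by omega⟩
      rw [show i + j + 1 - 1 - i = j from by omega]
      have hqp : (q : ℂ) ^ (i + j + 1 + 1) ≠ 0 := pow_ne_zero _ hq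
      field_simp
      ring
    have haux := prod_pow_aux q hq M
    linear_combination ((q : ℂ) ^ (M + 1)) ^ M * key1 +
      ((∏ i ∈ Finset.range M, (s₂ - q ^ (1 + i) * s₁)) * qp q q M * qp q (q * s₂ / s₁) M) * haux
  | succ k ih =>
    intro hk1
    have IH := ih (by omega)
    obtain ⟨n, rfl⟩ : ∃ n, M = k + 1 + n := ⟨M - (k + 1), by omega⟩
    rw [show k + 1 + n - (k + 1) = n from by omega]
    rw [show k + 1 + n - k = n + 1 from by omega] at IH
    simp only [qp_succ] at IH ⊢
    have hqp : (q : ℂ) ^ (k + 1 + n + 1) ≠ 0 := pow_ne_zero _ hq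
    have hα1 : (1 : ℂ) - q * (q ^ (k + 1 + n + 1))⁻¹ * q ^ n ≠ 0 := by
      have e : (1 : ℂ) - q * (q ^ (k + 1 + n + 1))⁻¹ * q ^ n
          = (1 - q ^ (k + 1)) * (-(q ^ (n + 1)) * (q ^ (k + 1 + n + 1))⁻¹) := by
        field_simp
        ring
      rw [e]
      exact mul_ne_zero (hA (k + 1) (by omega) (by omega))
        (mul_ne_zero (neg_ne_zero.mpr (pow_ne_zero _ hq)) (inv_ne_zero hqp))
    have hα2 : (1 : ℂ) - q * (q ^ (k + 1 + n + 1))⁻¹ * s₂ / s₁ * q ^ n ≠ 0 := by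
      have e : (1 : ℂ) - q * (q ^ (k + 1 + n + 1))⁻¹ * s₂ / s₁ * q ^ n
          = (s₂ - q ^ (k + 1) * s₁) * (-(q ^ (n + 1)) * (q ^ (k + 1 + n + 1))⁻¹ / s₁) := by
        field_simp
        ring
      rw [e]
      exact mul_ne_zero (hB (k + 1) (by omega) (by omega))
        (div_ne_zero (mul_ne_zero (neg_ne_zero.mpr (pow_ne_zero _ hq)) (inv_ne_zero hqp)) hs₁)
    have hαγ : ((1 - q * (q ^ (k + 1 + n + 1))⁻¹ * q ^ n) *
          (1 - q * (q ^ (k + 1 + n + 1))⁻¹ * s₂ / s₁ * q ^ n) * q ^ (k + 1 + n + 1)) *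
        ((1 - q * (q ^ (k + 1 + n + 1))⁻¹ * q ^ k) *
          (1 - q * (q ^ (k + 1 + n + 1))⁻¹ * s₁ / s₂ * q ^ k) * q ^ (k + 1 + n + 1))
        = ((1 - q * q ^ n) * (1 - q * s₂ / s₁ * q ^ n)) *
          ((1 - q * q ^ k) * (1 - q * s₁ / s₂ * q ^ k)) := by
      field_simp
      ring
    refine mul_left_cancel₀ (mul_ne_zero (mul_ne_zero hα1 hα2) hqp) ?_
    linear_combination ((1 - q * q ^ k) * (1 - q * s₁ / s₂ * q ^ k)) * IH -
      ((∏ i ∈ Finset.range (k + 1 + n), (s₂ - q ^ (1 + i) * s₁)) *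
        (qp q (q * (q ^ (k + 1 + n + 1))⁻¹) k * qp q (q * (q ^ (k + 1 + n + 1))⁻¹ * s₁ / s₂) k *
          ((q : ℂ) ^ (k + 1 + n + 1)) ^ k) *
        (qp q q n * qp q (q * s₂ / s₁) n)) * hαγ

/-- The terminating ₂φ₁ series `P` is invariant under the deformed
Weyl group action `π_m(σ₁)`. -/
theorem statement3 (m : ℕ) (hm : 1 ≤ m) (q s₁ s₂ ζ₁ ζ₂ : ℂ)
    (hq : q ≠ 0) (hs₁ : s₁ ≠ 0) (hs₂ : s₂ ≠ 0) (hζ₁ : ζ₁ ≠ 0) (hζ₂ : ζ₂ ≠ 0)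
    (h1 : ∀ k : ℕ, 1 ≤ k → k ≤ m - 1 → qp q q k ≠ 0)
    (h2 : ∀ k : ℕ, 1 ≤ k → k ≤ m - 1 → qp q (q * s₁ / s₂) k ≠ 0)
    (h3 : ∀ k : ℕ, 1 ≤ k → k ≤ m - 1 → qp q (q * s₂ / s₁) k ≠ 0)
    (h4 : ∀ k : ℕ, 1 ≤ k → k ≤ m - 1 → s₂ - q ^ k * s₁ ≠ 0) :
    (∏ k ∈ Finset.Icc 1 (m - 1), (s₁ - q ^ k * s₂) / (s₂ - q ^ k * s₁)) *
        Pser m q ζ₂ ζ₁ s₂ s₁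
      = Pser m q ζ₁ ζ₂ s₁ s₂ := by
  obtain ⟨M, rfl⟩ : ∃ M, m = M + 1 := ⟨m - 1, by omega⟩
  simp only [Nat.add_sub_cancel] at h1 h2 h3 h4 ⊢
  -- basic nonvanishing facts
  have hA : ∀ j, 1 ≤ j → j ≤ M → (1 : ℂ) - q ^ j ≠ 0 := by
    intro j hj1 hjM
    have h := qp_factor_ne (h1 M (by omega) le_rfl) (show j - 1 < M by omega)
    rwa [show q * q ^ (j - 1) = q ^ j from by rw [← pow_succ']; congr 1; omega] at h
  have hB : ∀ j, 1 ≤ j → j ≤ M → s₂ - q ^ j * s₁ ≠ 0 := fun j hj1 hjM => h4 j hj1 hjM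
  have hC : ∀ j, 1 ≤ j → j ≤ M → s₁ - q ^ j * s₂ ≠ 0 := by
    intro j hj1 hjM
    obtain ⟨i, rfl⟩ : ∃ i, j = i + 1 := ⟨j - 1, by omega⟩
    have h := qp_factor_ne (h3 M (by omega) le_rfl) (show i < M by omega)
    intro h0
    apply h
    have e : (1 : ℂ) - q * s₂ / s₁ * q ^ i = (s₁ - q ^ (i + 1) * s₂) / s₁ := by
      field_simp
      ring
    rw [e, h0, zero_div]
  have hCk : ∀ k, k ≤ M → qp q q k ≠ 0 := by
    intro k hk
    refine qp_ne fun i hi => ?_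
    rw [show q * q ^ i = q ^ (i + 1) from (pow_succ' q i).symm]
    exact hA (i + 1) (by omega) (by omega)
  have hEk : ∀ k, k ≤ M → qp q (q * s₁ / s₂) k ≠ 0 := by
    intro k hk
    refine qp_ne fun i hi => ?_
    have e : (1 : ℂ) - q * s₁ / s₂ * q ^ i = (s₂ - q ^ (i + 1) * s₁) / s₂ := by
      field_simp
      ring
    rw [e]
    exact div_ne_zero (hB (i + 1) (by omega) (by omega)) hs₂
  have hE'k : ∀ k, k ≤ M → qp q (q * s₂ / s₁) k ≠ 0 := by
    intro k hk
    refine qp_ne fun i hi => ?_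
    have e : (1 : ℂ) - q * s₂ / s₁ * q ^ i = (s₁ - q ^ (i + 1) * s₂) / s₁ := by
      field_simp
      ring
    rw [e]
    exact div_ne_zero (hC (i + 1) (by omega) (by omega)) hs₁
  have hPd : (∏ i ∈ Finset.range M, (s₂ - q ^ (1 + i) * s₁)) ≠ 0 :=
    Finset.prod_ne_zero_iff.2 fun i hi =>
      hB (1 + i) (by omega) (by have := Finset.mem_range.1 hi; omega)
  have hPi : (∏ j ∈ Finset.Icc 1 M, (s₁ - q ^ j * s₂) / (s₂ - q ^ j * s₁))
      = (∏ i ∈ Finset.range M, (s₁ - q ^ (1 + i) * s₂)) /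
        (∏ i ∈ Finset.range M, (s₂ - q ^ (1 + i) * s₁)) := by
    rw [← Finset.prod_div_distrib, ← Finset.Ico_add_one_right_eq_Icc, Finset.prod_Ico_eq_prod_range]
    simp
  unfold Pser
  simp only [Nat.add_sub_cancel]
  rw [← Finset.sum_range_reflect (fun k =>
      qp q (q * (q ^ (M + 1))⁻¹) k * qp q (q * (q ^ (M + 1))⁻¹ * s₂ / s₁) k /
        (qp q q k * qp q (q * s₂ / s₁) k) * ((q : ℂ) ^ (M + 1)) ^ k * (ζ₁ / ζ₂) ^ k) (M + 1)]
  simp only [Nat.add_sub_cancel]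
  rw [Finset.mul_sum, Finset.mul_sum, Finset.mul_sum]
  refine Finset.sum_congr rfl fun k hk => ?_
  rw [Finset.mem_range] at hk
  have hkM : k ≤ M := by omega
  have hkey := keyCross M q s₁ s₂ hq hs₁ hs₂ hA hB k hkM
  have hζ : ζ₂ ^ M * (ζ₁ / ζ₂) ^ (M - k) = ζ₁ ^ M * (ζ₂ / ζ₁) ^ k := by
    obtain ⟨j, rfl⟩ : ∃ j, M = k + j := ⟨M - k, by omega⟩
    rw [show k + j - k = j from by omega]
    field_simp
    have a : ζ₂ ^ j * ζ₂⁻¹ ^ j = 1 := by rw [← mul_pow, mul_inv_cancel₀ hζ₂, one_pow]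
    have b : ζ₁ ^ k * ζ₁⁻¹ ^ k = 1 := by rw [← mul_pow, mul_inv_cancel₀ hζ₁, one_pow]
    linear_combination (ζ₂ ^ k * ζ₁ ^ j) * a - (ζ₂ ^ k * ζ₁ ^ j) * b
  have hF : (∏ j ∈ Finset.Icc 1 M, (s₁ - q ^ j * s₂) / (s₂ - q ^ j * s₁)) *
      (qp q (q * (q ^ (M + 1))⁻¹) (M - k) * qp q (q * (q ^ (M + 1))⁻¹ * s₂ / s₁) (M - k) /
        (qp q q (M - k) * qp q (q * s₂ / s₁) (M - k)) * ((q : ℂ) ^ (M + 1)) ^ (M - k))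
      = qp q (q * (q ^ (M + 1))⁻¹) k * qp q (q * (q ^ (M + 1))⁻¹ * s₁ / s₂) k /
        (qp q q k * qp q (q * s₁ / s₂) k) * ((q : ℂ) ^ (M + 1)) ^ k := by
    have e1 : (∏ i ∈ Finset.range M, (s₁ - q ^ (1 + i) * s₂)) /
          (∏ i ∈ Finset.range M, (s₂ - q ^ (1 + i) * s₁)) *
        (qp q (q * (q ^ (M + 1))⁻¹) (M - k) * qp q (q * (q ^ (M + 1))⁻¹ * s₂ / s₁) (M - k) /
          (qp q q (M - k) * qp q (q * s₂ / s₁) (M - k)) * ((q : ℂ) ^ (M + 1)) ^ (M - k))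
        = ((∏ i ∈ Finset.range M, (s₁ - q ^ (1 + i) * s₂)) *
            (qp q (q * (q ^ (M + 1))⁻¹) (M - k) * qp q (q * (q ^ (M + 1))⁻¹ * s₂ / s₁) (M - k) *
              ((q : ℂ) ^ (M + 1)) ^ (M - k))) /
          ((∏ i ∈ Finset.range M, (s₂ - q ^ (1 + i) * s₁)) *
            (qp q q (M - k) * qp q (q * s₂ / s₁) (M - k))) := by
      ring
    have e2 : qp q (q * (q ^ (M + 1))⁻¹) k * qp q (q * (q ^ (M + 1))⁻¹ * s₁ / s₂) k /
          (qp q q k * qp q (q * s₁ / s₂) k) * ((q : ℂ) ^ (M + 1)) ^ k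
        = (qp q (q * (q ^ (M + 1))⁻¹) k * qp q (q * (q ^ (M + 1))⁻¹ * s₁ / s₂) k *
            ((q : ℂ) ^ (M + 1)) ^ k) / (qp q q k * qp q (q * s₁ / s₂) k) := by
      ring
    rw [hPi, e1, e2, div_eq_div_iff
      (mul_ne_zero hPd (mul_ne_zero (hCk (M - k) (by omega)) (hE'k (M - k) (by omega))))
      (mul_ne_zero (hCk k hkM) (hEk k hkM))]
    linear_combination hkey
  linear_combination (ζ₂ ^ M * (ζ₁ / ζ₂) ^ (M - k)) * hF +
    (qp q (q * (q ^ (M + 1))⁻¹) k * qp q (q * (q ^ (M + 1))⁻¹ * s₁ / s₂) k /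
      (qp q q k * qp q (q * s₁ / s₂) k) * ((q : ℂ) ^ (M + 1)) ^ k) * hζ
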